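/- Let K be a field of characteristic p > 0, V a finite-dimensional K-vector space, and T : V → V a linear map such that no eigenvalue of T (in an algebraic closure) has algebraic multiplicity divisible by p and positive. Let v be a valuation on K with a fixed extension w to the algebraic closure. Then for any real c: every eigenvalue λ of T satisfies w(λ) ≥ c if and only if v(Tr(T^n)) ≥ c·n for all n ≥ 1. -/

import Mathlib

open Finset Polynomial
open scoped Classical
open Module

section TraceStuff

variable {F : Type*} [Field F]

lemma aux_matrix_charpoly_sub_smul_one {n : Type*} [Fintype n] [DecidableEq n]
    (A : Matrix n n F) (μ : F) :
    (A - μ • (1 : Matrix n n F)).charpoly = A.charpoly.comp (X + C μ) := by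
  rw [Matrix.charpoly, Matrix.charpoly, comp_eq_aeval, ← AlgHom.coe_toRingHom,
    RingHom.map_det]
  congr 1
  refine Matrix.ext fun i j => ?_
  simp only [RingHom.mapMatrix_apply, Matrix.map_apply, AlgHom.coe_toRingHom]
  by_cases h : i = j
  · subst h
    simp only [Matrix.charmatrix_apply, Matrix.sub_apply, Matrix.smul_apply, Matrix.one_apply_eq,
      Matrix.diagonal_apply_eq, map_sub, aeval_X, aeval_C, smul_eq_mul, mul_one]
    rw [Polynomial.algebraMap_eq]; ring
  · simp [Matrix.charmatrix_apply, Matrix.one_apply, h, Matrix.diagonal_apply_ne _ h]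

variable {W : Type*} [AddCommGroup W] [Module F W] [FiniteDimensional F W]

lemma aux_charpoly_sub_smul_one (f : Module.End F W) (μ : F) :
    (f - μ • 1 : Module.End F W).charpoly = f.charpoly.comp (X + C μ) := by
  let b := Module.finBasis F W
  rw [← LinearMap.charpoly_toMatrix f b, ← LinearMap.charpoly_toMatrix (f - μ • 1 : Module.End F W) b]
  rw [map_sub, map_smul, LinearMap.toMatrix_one, aux_matrix_charpoly_sub_smul_one]

lemma aux_finrank_maxGenEigenspace (f : Module.End F W) (μ : F) :
    finrank F (f.maxGenEigenspace μ) = f.charpoly.rootMultiplicity μ := by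
  have h1 : f.maxGenEigenspace μ = (f - μ • 1 : Module.End F W).maxGenEigenspace 0 := by
    ext x
    simp [Module.End.mem_maxGenEigenspace]
  rw [h1, LinearMap.finrank_maxGenEigenspace_zero_eq, rootMultiplicity_eq_rootMultiplicity,
    ← aux_charpoly_sub_smul_one, rootMultiplicity_eq_natTrailingDegree']

end TraceStuff

section Tr2
variable {F : Type*} [Field F]
variable {W : Type*} [AddCommGroup W] [Module F W] [FiniteDimensional F W]

lemma aux_trace_restrict_pow (f : Module.End F W) (μ : F) (n : ℕ)
    (h : Set.MapsTo f (f.maxGenEigenspace μ) (f.maxGenEigenspace μ)) :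
    LinearMap.trace F _ ((f.restrict h) ^ n)
      = μ ^ n * (finrank F (f.maxGenEigenspace μ) : F) := by
  set N := f.maxGenEigenspace μ with hN
  set g : Module.End F N := f.restrict h with hg
  set u : Module.End F N := g - μ • 1 with hu
  have hcoe : ∀ (m : ℕ) (x : N), ((u ^ m) x : W) = (((f - μ • 1 : Module.End F W) ^ m) (x : W)) := by
    intro m
    induction m with
    | zero => intro x; simp
    | succ m ih =>
      intro x
      rw [pow_succ, pow_succ]
      have h1 : ∀ y : N, (u y : W) = (f - μ • 1 : Module.End F W) (y : W) := by
        intro y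
        simp [hu, hg, LinearMap.restrict_apply]
        rfl
      rw [Module.End.mul_apply, Module.End.mul_apply, ih (u x), h1 x]
  have hunil : IsNilpotent u := by
    refine ⟨finrank F W, ?_⟩
    ext x
    have hx : (x : W) ∈ f.genEigenspace μ (finrank F W) := by
      rw [← Module.End.maxGenEigenspace_eq_genEigenspace_finrank]
      exact x.2
    rw [Module.End.mem_genEigenspace_nat, LinearMap.mem_ker] at hx
    have := hcoe (finrank F W) x
    simp only [LinearMap.zero_apply, ZeroMemClass.coe_zero]
    rw [this, hx]
  have hsplit : g = μ • 1 + u := by rw [hu]; abel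
  have hcomm : Commute (μ • (1 : Module.End F N)) u := ((Commute.one_left u).smul_left μ)
  rw [hsplit, Commute.add_pow hcomm, map_sum]
  rw [Finset.sum_eq_single n]
  · have h2 : (μ • (1 : Module.End F N)) ^ n * u ^ (n - n) * (n.choose n : Module.End F N)
        = μ ^ n • 1 := by
      simp [_root_.smul_pow]
    rw [h2, map_smul, LinearMap.trace_one, smul_eq_mul]
  · intro m hm hmn
    have hnm : 0 < n - m := by
      rw [Finset.mem_range] at hm
      omega
    have hnil : IsNilpotent ((μ • (1 : Module.End F N)) ^ m * u ^ (n - m) * (n.choose m : Module.End F N)) := by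
      apply Commute.isNilpotent_mul_right (Nat.commute_cast _ _)
      apply Commute.isNilpotent_mul_left (Commute.pow_pow ((Commute.one_left u).smul_left μ) m (n - m))
      exact hunil.pow_of_pos hnm.ne'
    exact (LinearMap.isNilpotent_trace_of_isNilpotent hnil).eq_zero
  · intro hn
    simp at hn

lemma aux_trace_pow [IsAlgClosed F] (f : Module.End F W) (n : ℕ) :
    LinearMap.trace F W (f ^ n) = (f.charpoly.roots.map (· ^ n)).sum := by
  classical
  have hp0 : (f.charpoly) ≠ 0 := f.charpoly_monic.ne_zero
  set N := f.maxGenEigenspace with hNdef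
  have hbot : ∀ μ, N μ ≠ ⊥ ↔ μ ∈ f.charpoly.roots.toFinset := by
    intro μ
    rw [Multiset.mem_toFinset, mem_roots hp0, ← f.charpoly.rootMultiplicity_pos hp0,
      ← aux_finrank_maxGenEigenspace f μ]
    rw [Ne, ← Submodule.finrank_eq_zero (S := N μ)]
    exact Nat.pos_iff_ne_zero.symm
  have hNfin : {μ | N μ ≠ ⊥}.Finite := by
    apply Set.Finite.subset (f.charpoly.roots.toFinset : Finset F).finite_toSet
    intro μ hμ
    exact (hbot μ).mp hμ
  have hInt : DirectSum.IsInternal N :=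
    DirectSum.isInternal_submodule_of_iSupIndep_of_iSup_eq_top
      (f.independent_maxGenEigenspace) (f.iSup_maxGenEigenspace_eq_top)
  have hmapsTo : ∀ μ, Set.MapsTo f (N μ) (N μ) :=
    Module.End.mapsTo_maxGenEigenspace_of_comm rfl
  have hmapsTo' : ∀ μ, Set.MapsTo (f ^ n) (N μ) (N μ) := fun μ =>
    Module.End.mapsTo_maxGenEigenspace_of_comm (Commute.pow_right rfl n) μ
  rw [show f ^ n = (f ^ n) from rfl, LinearMap.trace_eq_sum_trace_restrict' hInt hNfin hmapsTo']
  have hterm : ∀ μ ∈ hNfin.toFinset,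
      LinearMap.trace F (N μ) ((f ^ n).restrict (hmapsTo' μ)) = μ ^ n * (finrank F (N μ) : F) := by
    intro μ _
    rw [← Module.End.pow_restrict n (hmapsTo μ), aux_trace_restrict_pow f μ n (hmapsTo μ)]
  rw [Finset.sum_congr rfl hterm, Finset.sum_multiset_map_count]
  have hfs : hNfin.toFinset = f.charpoly.roots.toFinset := by
    ext μ
    rw [Set.Finite.mem_toFinset, Set.mem_setOf_eq, hbot μ]
  rw [hfs]
  refine Finset.sum_congr rfl fun μ _ => ?_
  rw [count_roots, ← aux_finrank_maxGenEigenspace f μ, nsmul_eq_mul, mul_comm]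

end Tr2

section Cor
variable {K : Type*} [Field K]
variable {V : Type*} [AddCommGroup V] [Module K V] [FiniteDimensional K V]

lemma aux_trace_pow_eq_sum (T : V →ₗ[K] V) (d : ℕ)
    (α : Fin d → AlgebraicClosure K)
    (hα : (LinearMap.charpoly T).map (algebraMap K (AlgebraicClosure K)) =
      ∏ i : Fin d, (X - C (α i))) (n : ℕ) :
    algebraMap K (AlgebraicClosure K) (LinearMap.trace K V (T ^ n)) = ∑ i, α i ^ n := by
  have h1 := LinearMap.trace_baseChange (T ^ n) (AlgebraicClosure K)
  rw [LinearMap.baseChange_pow] at h1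
  rw [← h1, aux_trace_pow (LinearMap.baseChange (AlgebraicClosure K) T) n,
    LinearMap.charpoly_baseChange, hα]
  have h2 : (∏ i : Fin d, (X - C (α i)))
      = (Multiset.map (fun a => X - C a) (Finset.univ.val.map α)).prod := by
    rw [Multiset.map_map]; rfl
  rw [h2, roots_multiset_prod_X_sub_C, Multiset.map_map]
  rfl

end Cor

section Val
variable {L : Type*} [Field L] (w : L → WithTop ℝ)

lemma aux_w_sum (hw0 : w 0 = ⊤) (hwadd : ∀ x y, min (w x) (w y) ≤ w (x + y))
    {ι : Type*} (s : Finset ι) (g : ι → L) (C : WithTop ℝ)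
    (h : ∀ i ∈ s, C ≤ w (g i)) : C ≤ w (∑ i ∈ s, g i) := by
  classical
  induction s using Finset.cons_induction with
  | empty => simp [hw0]
  | cons a s ha ih =>
    rw [Finset.sum_cons]
    refine le_trans ?_ (hwadd _ _)
    rw [le_min_iff]
    exact ⟨h a (Finset.mem_cons_self _ _), ih fun i hi => h i (Finset.mem_cons_of_mem hi)⟩

lemma aux_w_pow (hw1 : w 1 = 0) (hwmul : ∀ x y, w (x * y) = w x + w y) (x : L) (n : ℕ) :
    w (x ^ n) = n • w x := by
  induction n with
  | zero => simpa using hw1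
  | succ n ih => rw [pow_succ, hwmul, ih, succ_nsmul]

lemma aux_w_ne_top (hw1 : w 1 = 0) (hwmul : ∀ x y, w (x * y) = w x + w y)
    {x : L} (hx : x ≠ 0) : w x ≠ ⊤ := by
  intro h
  have h2 := hwmul x x⁻¹
  rw [mul_inv_cancel₀ hx, hw1, h, top_add] at h2
  exact (WithTop.top_ne_zero h2.symm)

lemma aux_exists_lb {ι : Type*} (s : Finset ι) (g : ι → WithTop ℝ) :
    ∃ b : ℝ, ∀ i ∈ s, (b : WithTop ℝ) ≤ g i := by
  classical
  induction s using Finset.cons_induction with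
  | empty => exact ⟨0, by simp⟩
  | cons a s ha ih =>
    obtain ⟨b, hb⟩ := ih
    cases hga : g a with
    | top =>
      refine ⟨b, fun i hi => ?_⟩
      rcases Finset.mem_cons.mp hi with rfl | hi
      · rw [hga]; exact le_top
      · exact hb i hi
    | coe r =>
      refine ⟨min b r, fun i hi => ?_⟩
      rcases Finset.mem_cons.mp hi with rfl | hi
      · rw [hga]; exact_mod_cast min_le_right b r
      · exact le_trans (by exact_mod_cast min_le_left b r) (hb i hi)

end Val


/-- Let `K` be a field of characteristic `p > 0`, `V` a finite-dimensional `K`-vector space,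
and `T : V → V` a linear map whose eigenvalues `α₁, …, α_d` (in an algebraic closure, with
multiplicity) all have algebraic multiplicity not divisible by `p`. Let `v` be a (rank-one,
real-valued, additive) valuation on `K` and `w` an extension to the algebraic closure. Then
for any real `c`: every eigenvalue `λ` satisfies `w(λ) ≥ c` iff `v(Tr(T^n)) ≥ c·n` for all
`n ≥ 1`. -/
theorem stmt17 (K : Type*) [Field K] (p : ℕ) (hp : p.Prime) (hchar : CharP K p)
    (V : Type*) [AddCommGroup V] [Module K V] [FiniteDimensional K V]
    (T : V →ₗ[K] V) (d : ℕ) (hd : Module.finrank K V = d)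
    (α : Fin d → AlgebraicClosure K)
    (hα : (LinearMap.charpoly T).map (algebraMap K (AlgebraicClosure K)) =
      ∏ i : Fin d, (X - C (α i)))
    (hmult : ∀ i : Fin d, ¬ p ∣ (Finset.univ.filter (fun j => α j = α i)).card)
    (v : K → WithTop ℝ) (w : AlgebraicClosure K → WithTop ℝ)
    (hw0 : w 0 = ⊤) (hw1 : w 1 = 0)
    (hwmul : ∀ x y, w (x * y) = w x + w y)
    (hwadd : ∀ x y, min (w x) (w y) ≤ w (x + y))
    (hext : ∀ x : K, w (algebraMap K (AlgebraicClosure K) x) = v x)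
    (c : ℝ) :
    (∀ i : Fin d, (c : WithTop ℝ) ≤ w (α i)) ↔
      ∀ n : ℕ, 1 ≤ n → ((c * n : ℝ) : WithTop ℝ) ≤ v (LinearMap.trace K V (T ^ n)) := by
  haveI : CharP (AlgebraicClosure K) p :=
    charP_of_injective_algebraMap (algebraMap K (AlgebraicClosure K)).injective p
  have hv : ∀ n : ℕ, v (LinearMap.trace K V (T ^ n)) = w (∑ j, α j ^ n) := by
    intro n
    rw [← hext, aux_trace_pow_eq_sum T d α hα n]
  constructor
  · -- easy direction
    intro hwα n hn
    rw [hv n]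
    apply aux_w_sum w hw0 hwadd
    intro j _
    rw [aux_w_pow w hw1 hwmul]
    calc ((c * n : ℝ) : WithTop ℝ) = n • (c : WithTop ℝ) := by
          rw [← WithTop.coe_nsmul, nsmul_eq_mul, mul_comm]
      _ ≤ n • w (α j) := nsmul_le_nsmul_right (hwα j) n
  · intro H i
    by_cases h0 : α i = 0
    · rw [h0, hw0]; exact le_top
    set lam0 := α i with hlam0
    set B : Finset (AlgebraicClosure K) := (Finset.univ.image α).erase lam0 with hB
    set r : Polynomial (AlgebraicClosure K) := X * ∏ b ∈ B, (X - C b) with hr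
    have hr0 : r.coeff 0 = 0 := by
      rw [hr, mul_coeff_zero, coeff_X_zero, zero_mul]
    have hrroot : ∀ j : Fin d, α j ≠ lam0 → r.eval (α j) = 0 := by
      intro j hj
      have hjB : α j ∈ B := Finset.mem_erase.mpr ⟨hj, Finset.mem_image_of_mem α (Finset.mem_univ j)⟩
      rw [hr, eval_mul, eval_prod]
      rw [Finset.prod_eq_zero hjB (by simp), mul_zero]
    have hrlam0 : r.eval lam0 ≠ 0 := by
      rw [hr, eval_mul, eval_prod, eval_X]
      refine mul_ne_zero h0 (Finset.prod_ne_zero_iff.mpr fun b hb => ?_)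
      simp only [eval_sub, eval_X, eval_C]
      exact sub_ne_zero.mpr (Ne.symm (Finset.ne_of_mem_erase hb))
    set m : ℕ := (Finset.univ.filter (fun j => α j = lam0)).card with hmdef
    have hm : (m : AlgebraicClosure K) ≠ 0 := by
      rw [Ne, CharP.cast_eq_zero_iff (AlgebraicClosure K) p]
      exact hmult i
    set D : ℕ := r.natDegree + 1 with hD
    have hkey : ∀ N : ℕ, ∑ k ∈ Finset.range D, r.coeff k * (∑ j, α j ^ (N + k))
        = (m : AlgebraicClosure K) * (r.eval lam0 * lam0 ^ N) := by
      intro N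
      have e1 : ∀ j : Fin d, ∑ k ∈ Finset.range D, r.coeff k * α j ^ (N + k)
          = r.eval (α j) * α j ^ N := by
        intro j
        rw [eval_eq_sum_range, Finset.sum_mul]
        refine Finset.sum_congr rfl fun k _ => ?_
        rw [pow_add]; ring
      calc ∑ k ∈ Finset.range D, r.coeff k * (∑ j, α j ^ (N + k))
          = ∑ k ∈ Finset.range D, ∑ j, r.coeff k * α j ^ (N + k) := by
            simp_rw [Finset.mul_sum]
        _ = ∑ j, ∑ k ∈ Finset.range D, r.coeff k * α j ^ (N + k) := Finset.sum_comm
        _ = ∑ j, r.eval (α j) * α j ^ N := Finset.sum_congr rfl fun j _ => e1 j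
        _ = ∑ j, (if α j = lam0 then r.eval lam0 * lam0 ^ N else 0) := by
            refine Finset.sum_congr rfl fun j _ => ?_
            by_cases hj : α j = lam0
            · rw [hj, if_pos rfl]
            · rw [if_neg hj, hrroot j hj, zero_mul]
        _ = (m : AlgebraicClosure K) * (r.eval lam0 * lam0 ^ N) := by
            rw [← Finset.sum_filter, Finset.sum_const, nsmul_eq_mul]
    obtain ⟨b, hb⟩ := aux_exists_lb (Finset.range D)
      (fun k => w (r.coeff k) + ((c * k : ℝ) : WithTop ℝ))
    have hAne : w ((m : AlgebraicClosure K) * r.eval lam0) ≠ ⊤ :=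
      aux_w_ne_top w hw1 hwmul (mul_ne_zero hm hrlam0)
    obtain ⟨A, hAeq⟩ := WithTop.ne_top_iff_exists.mp hAne
    have htne : w lam0 ≠ ⊤ := aux_w_ne_top w hw1 hwmul h0
    obtain ⟨t, hteq⟩ := WithTop.ne_top_iff_exists.mp htne
    have hmain : ∀ N : ℕ, 1 ≤ N → c * N + b ≤ A + N * t := by
      intro N hN
      have h1 : ((c * N + b : ℝ) : WithTop ℝ)
          ≤ w (∑ k ∈ Finset.range D, r.coeff k * (∑ j, α j ^ (N + k))) := by
        apply aux_w_sum w hw0 hwadd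
        intro k hk
        by_cases hck : r.coeff k = 0
        · rw [hck, zero_mul, hw0]; exact le_top
        · have hk1 : 1 ≤ k := by
            rcases Nat.eq_zero_or_pos k with rfl | h
            · exact absurd hr0 hck
            · exact h
          have h3 : ((c * (N + k) : ℝ) : WithTop ℝ) ≤ w (∑ j, α j ^ (N + k)) := by
            rw [← hv (N + k)]
            exact_mod_cast H (N + k) (by omega)
          rw [hwmul]
          calc ((c * N + b : ℝ) : WithTop ℝ)
              ≤ ((c * N : ℝ) : WithTop ℝ) + (w (r.coeff k) + ((c * k : ℝ) : WithTop ℝ)) := by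
                rw [WithTop.coe_add]
                exact add_le_add_right (hb k hk) _
            _ = w (r.coeff k) + ((c * (N + k) : ℝ) : WithTop ℝ) := by
                rw [show (c * ((N : ℝ) + (k : ℝ)) : ℝ) = c * (N : ℝ) + c * (k : ℝ) by ring,
                  WithTop.coe_add]
                abel
            _ ≤ w (r.coeff k) + w (∑ j, α j ^ (N + k)) := add_le_add_right h3 _
      rw [hkey N, ← mul_assoc, hwmul, ← hAeq, aux_w_pow w hw1 hwmul, ← hteq,
        ← WithTop.coe_nsmul, nsmul_eq_mul, ← WithTop.coe_add] at h1
      exact_mod_cast h1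
    by_contra hlt
    rw [← hteq] at hlt
    have hlt' : t < c := by
      rcases lt_or_ge t c with h | h
      · exact h
      · exact absurd (by exact_mod_cast h : (c : WithTop ℝ) ≤ (t : WithTop ℝ)) hlt
    have hpos : 0 < c - t := sub_pos.mpr hlt'
    obtain ⟨N, hN⟩ := exists_nat_gt (max 1 ((A - b) / (c - t)))
    have hN1 : 1 ≤ N := by
      have : (1 : ℝ) < N := lt_of_le_of_lt (le_max_left _ _) hN
      exact_mod_cast this.le
    have h4 := hmain N hN1
    have h5 : (N : ℝ) * (c - t) ≤ A - b := by ring_nf; ring_nf at h4; linarith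
    have h6 : (A - b) / (c - t) < N := lt_of_le_of_lt (le_max_right _ _) hN
    rw [div_lt_iff₀ hpos] at h6
    linarith
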